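/- arXiv:1302.2506 — 2 statements merged into one kernel-verified Lean document; each statement's English description precedes it below -/
import Mathlib

section
/- Let Λ be a finitely generated free abelian group, (α_i)_{i ∈ I} a finite family of elements of Λ linearly independent over ℚ, and k an integral domain. Then for every map χ : Λ^{pos,sat} → k satisfying χ(0) = 1 and χ(λ + μ) = χ(λ)·χ(μ) (i.e. every homomorphism from the additive monoid Λ^{pos,sat} to the multiplicative monoid of k), there exists a unique subset S ⊆ I such that { λ ∈ Λ^{pos,sat} : χ(λ) ≠ 0 } = Λ^{pos,sat}_S. (This is the k-points statement underlying the paper's decomposition of the toric variety of characters 𝔠h(G) = Spec k[Λ^{pos,sat_G}] into the locally closed strata ∘𝔠(M) indexed by the standard parabolics P of G with Levi quotient M.) -/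
open scoped TensorProduct

/-- For a family `α : I → Λ` and a subset `S ⊆ I`, `posSatOn Λ α S` is the set
`Λ^{pos,sat}_S` of elements of `Λ` that can be written (inside `ℚ ⊗[ℤ] Λ`) as a linear
combination of the `α i`, `i ∈ S`, with nonnegative rational coefficients.
For `S = Set.univ` this is the saturated positive span `Λ^{pos,sat}`. -/
def posSatOn (Λ : Type*) [AddCommGroup Λ] {I : Type*} [Fintype I]
    (α : I → Λ) (S : Set I) : Set Λ :=
  {lam | ∃ c : I → ℚ, (∀ i, 0 ≤ c i) ∧ (∀ i ∉ S, c i = 0) ∧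
    ((1 : ℚ) ⊗ₜ[ℤ] lam : ℚ ⊗[ℤ] Λ) = ∑ i, c i • ((1 : ℚ) ⊗ₜ[ℤ] α i)}

section Aux
variable {Λ : Type*} [AddCommGroup Λ] {I : Type*} [Fintype I] {α : I → Λ}

lemma one_tmul_inj (Λ : Type*) [AddCommGroup Λ] [Module.Free ℤ Λ] {x y : Λ}
    (h : ((1:ℚ) ⊗ₜ[ℤ] x : ℚ ⊗[ℤ] Λ) = (1:ℚ) ⊗ₜ[ℤ] y) : x = y := by
  let b := Module.Free.chooseBasis ℤ Λ
  apply b.repr.injective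
  ext i
  have := congrArg (fun z => (b.baseChange ℚ).repr z i) h
  simp only [Module.Basis.baseChange_repr_tmul, smul_eq_mul, mul_one, zsmul_eq_mul] at this
  exact_mod_cast this

lemma posSatOn_zero (S : Set I) : (0 : Λ) ∈ posSatOn Λ α S :=
  ⟨0, fun _ => le_refl _, fun _ _ => rfl, by simp [TensorProduct.tmul_zero]⟩

lemma posSatOn_add {S : Set I} {x y : Λ} (hx : x ∈ posSatOn Λ α S)
    (hy : y ∈ posSatOn Λ α S) : x + y ∈ posSatOn Λ α S := by
  obtain ⟨c, hc0, hcS, hc⟩ := hx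
  obtain ⟨d, hd0, hdS, hd⟩ := hy
  refine ⟨c + d, fun i => add_nonneg (hc0 i) (hd0 i),
    fun i hi => by simp [hcS i hi, hdS i hi], ?_⟩
  simp only [TensorProduct.tmul_add, hc, hd, Pi.add_apply, add_smul, Finset.sum_add_distrib]

lemma posSatOn_sum {S : Set I} {J : Type*} (s : Finset J) (f : J → Λ)
    (hf : ∀ j ∈ s, f j ∈ posSatOn Λ α S) : (∑ j ∈ s, f j) ∈ posSatOn Λ α S := by
  classical
  induction s using Finset.cons_induction with
  | empty => simpa using posSatOn_zero S
  | cons a s ha ih =>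
    rw [Finset.sum_cons]
    exact posSatOn_add (hf a (by simp)) (ih fun j hj => hf j (by simp [hj]))

lemma posSatOn_nsmul {S : Set I} {x : Λ} (hx : x ∈ posSatOn Λ α S) (n : ℕ) :
    n • x ∈ posSatOn Λ α S := by
  induction n with
  | zero => simpa using posSatOn_zero S
  | succ n ih => rw [succ_nsmul]; exact posSatOn_add ih hx

lemma alpha_mem [DecidableEq I] {S : Set I} {i : I} (hi : i ∈ S) :
    α i ∈ posSatOn Λ α S := by
  refine ⟨fun j => if j = i then 1 else 0, fun j => by positivity,
    fun j hj => if_neg (by rintro rfl; exact hj hi), ?_⟩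
  simp [ite_smul, Finset.sum_ite_eq']

lemma mem_iff_alpha_mem [DecidableEq I]
    (hα : LinearIndependent ℚ fun i => ((1 : ℚ) ⊗ₜ[ℤ] α i : ℚ ⊗[ℤ] Λ))
    (S : Set I) (i : I) : i ∈ S ↔ α i ∈ posSatOn Λ α S := by
  refine ⟨fun hi => alpha_mem hi, fun ⟨c, hc0, hcS, hc⟩ => ?_⟩
  by_contra hi
  have h0 : c i = 0 := hcS i hi
  have hrep : ((1 : ℚ) ⊗ₜ[ℤ] α i : ℚ ⊗[ℤ] Λ)
      = ∑ j, (fun j => if j = i then (1:ℚ) else 0) j • ((1 : ℚ) ⊗ₜ[ℤ] α j) := by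
    simp [ite_smul, Finset.sum_ite_eq']
  have := Fintype.linearIndependent_iff.mp hα
    (fun j => c j - if j = i then 1 else 0) ?_ i
  · simp [h0] at this
  · simp only [sub_smul, Finset.sum_sub_distrib, ← hc, ← hrep, sub_self]

/-- Clearing denominators. -/
lemma clear_denoms [Module.Free ℤ Λ] (c : I → ℚ) (hc0 : ∀ i, 0 ≤ c i) (lam : Λ)
    (hrep : ((1 : ℚ) ⊗ₜ[ℤ] lam : ℚ ⊗[ℤ] Λ) = ∑ i, c i • ((1 : ℚ) ⊗ₜ[ℤ] α i)) :
    ∃ (N : ℕ) (m : I → ℕ), 0 < N ∧ (∀ i, (m i : ℚ) = N * c i) ∧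
      N • lam = ∑ i, m i • α i := by
  classical
  set N : ℕ := ∏ i, (c i).den with hNdef
  have hN : 0 < N := Finset.prod_pos fun i _ => (c i).pos
  set m : I → ℕ := fun i => (c i).num.toNat * (N / (c i).den) with hm
  have hmc : ∀ i, (m i : ℚ) = N * c i := by
    intro i
    have hdvd : (c i).den ∣ N := Finset.dvd_prod_of_mem _ (Finset.mem_univ i)
    have hnum : ((c i).num.toNat : ℚ) = (c i).num := by
      exact_mod_cast Int.toNat_of_nonneg (Rat.num_nonneg.mpr (hc0 i))
    have hdiv : ((N / (c i).den : ℕ) : ℚ) = (N : ℚ) / ((c i).den : ℚ) :=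
      Nat.cast_div hdvd (by exact_mod_cast (c i).den_nz)
    rw [hm]
    push_cast [hnum, hdiv]
    rw [show ((c i).num:ℚ) * ((N:ℚ)/((c i).den:ℚ)) = (N:ℚ) * (((c i).num:ℚ)/((c i).den:ℚ)) by ring,
      Rat.num_div_den]
  refine ⟨N, m, hN, hmc, one_tmul_inj Λ ?_⟩
  rw [TensorProduct.tmul_smul, hrep, Finset.smul_sum, TensorProduct.tmul_sum]
  refine Finset.sum_congr rfl fun i _ => ?_
  rw [TensorProduct.tmul_smul, ← Nat.cast_smul_eq_nsmul ℚ N,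
    ← Nat.cast_smul_eq_nsmul ℚ (m i), smul_smul, ← hmc i]

end Aux

/-- Let `Λ` be a finitely generated free abelian group, `(α i)_{i ∈ I}` a
finite family of elements of `Λ` linearly independent over `ℚ`, and `k` an integral domain.
For every map `χ` from the additive monoid `Λ^{pos,sat}` to the multiplicative monoid of `k`
(i.e. `χ 0 = 1` and `χ (λ + μ) = χ λ * χ μ` for `λ, μ ∈ Λ^{pos,sat}`) there is a unique
subset `S ⊆ I` such that `{λ ∈ Λ^{pos,sat} | χ λ ≠ 0} = Λ^{pos,sat}_S`. -/
theorem exists_unique_support_subset_of_char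
    (Λ : Type*) [AddCommGroup Λ] [Module.Free ℤ Λ] [Module.Finite ℤ Λ]
    (I : Type*) [Fintype I] (α : I → Λ)
    (hα : LinearIndependent ℚ fun i => ((1 : ℚ) ⊗ₜ[ℤ] α i : ℚ ⊗[ℤ] Λ))
    (k : Type*) [CommRing k] [IsDomain k]
    (χ : Λ → k) (hχ0 : χ 0 = 1)
    (hχadd : ∀ lam mu : Λ, lam ∈ posSatOn Λ α Set.univ → mu ∈ posSatOn Λ α Set.univ →
      χ (lam + mu) = χ lam * χ mu) :
    ∃! S : Set I, {lam | lam ∈ posSatOn Λ α Set.univ ∧ χ lam ≠ 0} = posSatOn Λ α S := by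
  classical
  set M := posSatOn Λ α Set.univ with hM
  -- multiplicativity on ℕ-smul and sums
  have chi_nsmul : ∀ {x : Λ}, x ∈ M → ∀ n : ℕ, χ (n • x) = χ x ^ n := by
    intro x hx n
    induction n with
    | zero => simpa using hχ0
    | succ n ih =>
      rw [succ_nsmul, hχadd _ _ (posSatOn_nsmul hx n) hx, ih, pow_succ]
  have chi_sum : ∀ (f : I → Λ), (∀ i, f i ∈ M) → χ (∑ i, f i) = ∏ i, χ (f i) := by
    intro f hf
    have : ∀ s : Finset I, χ (∑ i ∈ s, f i) = ∏ i ∈ s, χ (f i) := by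
      intro s
      induction s using Finset.cons_induction with
      | empty => simpa using hχ0
      | cons a s ha ih =>
        rw [Finset.sum_cons, Finset.prod_cons,
          hχadd _ _ (hf a) (posSatOn_sum s f fun j _ => hf j), ih]
    exact this Finset.univ
  have hmemM : ∀ i : I, α i ∈ M := fun i => alpha_mem (Set.mem_univ i)
  set S : Set I := {i | χ (α i) ≠ 0} with hS
  refine ⟨S, ?_, ?_⟩
  · ext lam
    simp only [Set.mem_setOf_eq]
    constructor
    · rintro ⟨⟨c, hc0, -, hrep⟩, hne⟩
      obtain ⟨N, m, hN, hmc, heq⟩ := clear_denoms c hc0 lam hrep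
      refine ⟨c, hc0, fun i hi => ?_, hrep⟩
      by_contra hci
      -- m i ≥ 1
      have hmi : m i ≠ 0 := by
        intro h0
        apply hci
        have := hmc i
        rw [h0] at this
        have : (N : ℚ) * c i = 0 := by exact_mod_cast this.symm
        rcases mul_eq_zero.mp this with h | h
        · exact absurd h (by positivity)
        · exact h
      -- split off one copy of α i
      set m' : I → ℕ := fun j => m j - (if j = i then 1 else 0) with hm'
      have hsplit : ∑ j, m j • α j = α i + ∑ j, m' j • α j := by
        have : ∀ j, m j • α j = (if j = i then α j else 0) + m' j • α j := by
          intro j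
          by_cases hj : j = i
          · subst hj
            simp only [hm', if_pos rfl]
            conv_lhs => rw [← Nat.succ_pred_eq_of_pos (Nat.pos_of_ne_zero hmi)]
            rw [Nat.succ_eq_add_one, add_nsmul, one_nsmul, add_comm]
            simp
          · simp [hm', hj]
        rw [Finset.sum_congr rfl fun j _ => this j, Finset.sum_add_distrib,
          Finset.sum_ite_eq' Finset.univ i (fun j => α j)]
        simp
      have hlam' : (∑ j, m' j • α j) ∈ M :=
        posSatOn_sum _ _ fun j _ => posSatOn_nsmul (hmemM j) (m' j)
      have : χ lam ^ N = χ (α i) * χ (∑ j, m' j • α j) := by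
        rw [← chi_nsmul ⟨c, hc0, fun j hj => absurd (Set.mem_univ j) hj, hrep⟩ N,
          heq, hsplit, hχadd _ _ (hmemM i) hlam']
      exact hi (fun h => pow_ne_zero N hne (by rw [this, h, zero_mul]))
    · rintro ⟨c, hc0, hcS, hrep⟩
      have hlamM : lam ∈ M := ⟨c, hc0, fun j hj => absurd (Set.mem_univ j) hj, hrep⟩
      refine ⟨hlamM, ?_⟩
      obtain ⟨N, m, hN, hmc, heq⟩ := clear_denoms c hc0 lam hrep
      have : χ lam ^ N = ∏ i, χ (α i) ^ m i := by
        rw [← chi_nsmul hlamM N, heq,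
          chi_sum _ (fun i => posSatOn_nsmul (hmemM i) (m i))]
        exact Finset.prod_congr rfl fun i _ => chi_nsmul (hmemM i) (m i)
      have hne : χ lam ^ N ≠ 0 := by
        rw [this]
        refine Finset.prod_ne_zero_iff.mpr fun i _ => ?_
        by_cases hi : i ∈ S
        · exact pow_ne_zero _ hi
        · have : c i = 0 := hcS i hi
          have hmi : m i = 0 := by
            have h2 : ((m i : ℕ) : ℚ) = 0 := by rw [hmc i, hcS i hi, mul_zero]
            exact_mod_cast h2
          simp [hmi]
      exact fun h => hne (by rw [h, zero_pow hN.ne'])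
  · intro S' hS'
    ext i
    rw [mem_iff_alpha_mem hα S' i, ← hS']
    simp only [Set.mem_setOf_eq]
    exact ⟨fun h => h.2, fun h => ⟨hmemM i, h⟩⟩
end

section
/- Let A be a small category and let F', F'' : A → Cat be functors to the category of categories, and let T : F' ⟹ F'' be a natural transformation such that for every object a of A the functor T_a : F'(a) → F''(a) is fully faithful. Then the induced functor Glue(T) : Glue(F') → Glue(F''), which sends an object ((c_a)_a, (γ_φ)_φ) to ((T_{a}(c_a))_a, (T_{a2}(γ_φ))_φ) (using the equality F''(φ) ∘ T_{a1} = T_{a2} ∘ F'(φ)) and acts on morphisms by (f_a)_a ↦ (T_a(f_a))_a, is fully faithful. (This is Lemma 9.1.5 of the paper, stated at the level of ordinary categories; it is the statement that gluing a levelwise fully faithful family of functors yields a fully faithful functor between lax limits.) -/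
open CategoryTheory

universe w v' u' v u

namespace LaxLimitGlue

variable {A : Type u} [Category.{v} A]

/-- An object of the glued category (lax limit) `Glue(F)` of a functor `F : A ⥤ Cat`:
a family of objects `pt a : F.obj a` together with structure morphisms
`glue φ : (F.map φ).obj (pt a) ⟶ pt b` for every arrow `φ : a ⟶ b`, compatible with
identities and compositions (`γ_{ψ∘φ} = γ_ψ ∘ F(ψ)(γ_φ)`). -/
structure GlueObj (F : A ⥤ Cat.{v', u'}) where
  pt : ∀ a : A, F.obj a
  glue : ∀ {a b : A} (φ : a ⟶ b), (F.map φ).toFunctor.obj (pt a) ⟶ pt b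
  glue_id : ∀ a : A, glue (𝟙 a) = eqToHom (by rw [F.map_id]; rfl)
  glue_comp : ∀ {a b c : A} (φ : a ⟶ b) (ψ : b ⟶ c),
    glue (φ ≫ ψ) = eqToHom (by rw [F.map_comp]; rfl) ≫ (F.map ψ).toFunctor.map (glue φ) ≫ glue ψ

variable {F : A ⥤ Cat.{v', u'}}

/-- A morphism in the glued category `Glue(F)`: a family of morphisms `f a : X.pt a ⟶ Y.pt a`
in the fibers, compatible with the structure morphisms. -/
structure GlueHom (X Y : GlueObj F) where
  app : ∀ a : A, X.pt a ⟶ Y.pt a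
  naturality : ∀ {a b : A} (φ : a ⟶ b),
    (F.map φ).toFunctor.map (app a) ≫ Y.glue φ = X.glue φ ≫ app b

theorem GlueHom.ext' {X Y : GlueObj F} {f g : GlueHom X Y}
    (h : ∀ a, f.app a = g.app a) : f = g := by
  obtain ⟨fapp, _⟩ := f
  obtain ⟨gapp, _⟩ := g
  have : fapp = gapp := funext h
  subst this
  rfl

/-- The glued category (lax limit) of `F : A ⥤ Cat`. -/
instance instCategoryGlueObj : Category (GlueObj F) where
  Hom X Y := GlueHom X Y
  id X :=
    { app := fun a => 𝟙 (X.pt a)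
      naturality := by intro a b φ; simp }
  comp f g :=
    { app := fun a => GlueHom.app f a ≫ GlueHom.app g a
      naturality := by
        intro a b φ
        rw [Functor.map_comp, Category.assoc, GlueHom.naturality, ← Category.assoc,
          GlueHom.naturality, Category.assoc] }
  id_comp f := GlueHom.ext' fun a => Category.id_comp _
  comp_id f := GlueHom.ext' fun a => Category.comp_id _
  assoc f g h := GlueHom.ext' fun a => Category.assoc _ _ _

variable {G : A ⥤ Cat.{v', u'}}

/-- The functor `Glue(T) : Glue(F) ⥤ Glue(G)` induced by a natural transformation
`T : F ⟶ G`: it sends `((c_a)_a, (γ_φ)_φ)` to `((T_a (c_a))_a, (T_{a₂} (γ_φ))_φ)`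
(using the naturality equality `F''(φ) ∘ T_{a₁} = T_{a₂} ∘ F'(φ)`) and acts on morphisms
by `(f_a)_a ↦ (T_a (f_a))_a`. -/
def glueMap (T : F ⟶ G) : GlueObj F ⥤ GlueObj G where
  obj X :=
    { pt := fun a => (T.app a).toFunctor.obj (X.pt a)
      glue := fun {a b} φ =>
        eqToHom (Functor.congr_obj
          (show (T.app a).toFunctor ⋙ (G.map φ).toFunctor = (F.map φ).toFunctor ⋙ (T.app b).toFunctor from
            congrArg Cat.Hom.toFunctor (T.naturality φ).symm)
          (X.pt a)) ≫ (T.app b).toFunctor.map (X.glue φ)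
      glue_id := by
        intro a
        try dsimp only
        rw [X.glue_id, eqToHom_map, eqToHom_trans]
      glue_comp := by
        intro a b c φ ψ
        have hψ : (F.map ψ).toFunctor ⋙ (T.app c).toFunctor = (T.app b).toFunctor ⋙ (G.map ψ).toFunctor :=
            congrArg Cat.Hom.toFunctor (T.naturality ψ)
        have key := Functor.congr_hom hψ (X.glue φ)
        simp only [Functor.comp_map] at key
        try dsimp only
        rw [X.glue_comp]
        simp only [Functor.map_comp, eqToHom_map, Category.assoc, eqToHom_trans_assoc]
        rw [key]
        simp only [Category.assoc, eqToHom_trans_assoc] }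
  map {X Y} f :=
    { app := fun a => (T.app a).toFunctor.map (GlueHom.app f a)
      naturality := by
        intro a b φ
        have hφ : (T.app a).toFunctor ⋙ (G.map φ).toFunctor = (F.map φ).toFunctor ⋙ (T.app b).toFunctor :=
            congrArg Cat.Hom.toFunctor (T.naturality φ).symm
        have key := Functor.congr_hom hφ (GlueHom.app f a)
        simp only [Functor.comp_map] at key
        dsimp only
        rw [key]
        simp only [Category.assoc, eqToHom_trans_assoc, eqToHom_refl, Category.id_comp,
          ← Functor.map_comp, GlueHom.naturality] }
  map_id X := GlueHom.ext' fun a => by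
    show (T.app a).toFunctor.map (𝟙 (X.pt a)) = 𝟙 _
    simp
  map_comp f g := GlueHom.ext' fun a => by
    show (T.app a).toFunctor.map (GlueHom.app f a ≫ GlueHom.app g a) =
      (T.app a).toFunctor.map (GlueHom.app f a) ≫ (T.app a).toFunctor.map (GlueHom.app g a)
    simp

/-- Let `A` be a small category, `F, G : A ⥤ Cat`, and `T : F ⟹ G`
a natural transformation such that for every object `a` of `A` the functor
`T.app a : F.obj a ⥤ G.obj a` is fully faithful.  Then the induced functor
`Glue(T) : Glue(F) ⥤ Glue(G)` between the lax limits is fully faithful. -/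
theorem glueMap_full_and_faithful (T : F ⟶ G)
    (hfull : ∀ a : A, (T.app a).toFunctor.Full) (hfaithful : ∀ a : A, (T.app a).toFunctor.Faithful) :
    (glueMap T).Full ∧ (glueMap T).Faithful := by
  constructor
  · constructor
    intro X Y g
    have hT : ∀ a, (T.app a).toFunctor.Full := hfull
    have hTf : ∀ a, (T.app a).toFunctor.Faithful := hfaithful
    refine ⟨⟨fun a => (T.app a).toFunctor.preimage (GlueHom.app g a), ?_⟩, ?_⟩
    · intro a b φ
      apply (T.app b).toFunctor.map_injective
      have hφ : (F.map φ).toFunctor ⋙ (T.app b).toFunctor = (T.app a).toFunctor ⋙ (G.map φ).toFunctor :=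
        congrArg Cat.Hom.toFunctor (T.naturality φ)
      have key := Functor.congr_hom hφ ((T.app a).toFunctor.preimage (GlueHom.app g a))
      simp only [Functor.comp_map, Functor.map_preimage] at key
      have hnat := g.naturality φ
      dsimp only [glueMap] at hnat
      simp only [Functor.map_comp, Functor.map_preimage]
      rw [key]
      erw [Functor.map_preimage]
      simp only [Category.assoc]
      rw [hnat]
      simp
      erw [Functor.map_preimage]
    · apply GlueHom.ext'
      intro a
      show (T.app a).toFunctor.map ((T.app a).toFunctor.preimage (GlueHom.app g a)) = GlueHom.app g a
      exact (T.app a).toFunctor.map_preimage _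
  · constructor
    intro X Y f g h
    apply GlueHom.ext'
    intro a
    apply (T.app a).toFunctor.map_injective
    exact congrArg (fun m => GlueHom.app m a) h


end LaxLimitGlue
end
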